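/- arXiv:math/9806042 — 2 statements merged into one kernel-verified Lean document; each statement's English description precedes it below -/
import Mathlib

section
/- Let b, c be even integers with 0 ≤ c < b, and let D be the (b-c)×(b-c) matrix over ℚ with rows and columns indexed by c ≤ i,j < b, whose (i,j) entry equals C(c - b/2 - 1/2, 2c-1-j) if i = c, and C(c - b/2 + 1/2, i-j+c) if c < i < b. Then the columns of D satisfy the explicit linear relation: for every i with c ≤ i ≤ b-1, ∑_{j=c}^{b-1} (-1)^j · (1-b+c)_{j-c} · (1/2 - b/2)_{j-c} / ( (j-c)! · (1-b)_{j-c} ) · D(i,j) = 0. -/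
open Finset

/-- Generalized binomial coefficient `C(x,k)`. -/
def gbinom (x : ℚ) (k : ℤ) : ℚ :=
  if 0 ≤ k then (∏ m ∈ Finset.range k.toNat, (x - m)) / (k.toNat.factorial : ℚ) else 0

/-- Shifted factorial `(a)_k` with integer index. -/
def poch (a : ℚ) (k : ℤ) : ℚ :=
  if 0 ≤ k then ∏ m ∈ Finset.range k.toNat, (a + m)
  else 1 / ∏ m ∈ Finset.range (-k).toNat, (a - (m + 1))

/-- The matrix `M(x;b,c)`. -/
def Mmat (x : ℚ) (b c : ℕ) : Matrix (Fin (b + c)) (Fin (b + c)) ℚ := fun i j =>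
  if (i : ℕ) < c then
    (if (j : ℕ) < b then gbinom (x + (j : ℕ)) ((i : ℕ) : ℤ)
     else gbinom (2 * x + (j : ℕ)) ((i : ℕ) : ℤ))
  else if (i : ℕ) < b then
    (if (j : ℕ) < c then 0
     else if (j : ℕ) < b then gbinom (x + (j : ℕ)) ((i : ℕ) : ℤ)
     else gbinom (2 * x + (j : ℕ)) ((i : ℕ) : ℤ))
  else
    (if (j : ℕ) < c then 2 * gbinom (x + (j : ℕ)) (((i : ℕ) : ℤ) - (b : ℤ))
     else if (j : ℕ) < b then gbinom (x + (j : ℕ)) (((i : ℕ) : ℤ) - (b : ℤ))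
     else 0)

/-- `Δ(x;b,c)`. -/
def Δdet (x : ℚ) (b c : ℕ) : ℚ := (Mmat x b c).det

/-- The matrix `M'(x;b,c)`; column index `j` of the paper is `c + j'`. -/
def M'mat (x : ℚ) (b c : ℕ) : Matrix (Fin b) (Fin b) ℚ := fun i j =>
  if c + (j : ℕ) < b then
    gbinom (x + (c : ℕ)) (((i : ℕ) : ℤ) - ((c : ℤ) + (j : ℕ)) + (c : ℤ))
  else if (i : ℕ) < c then
    2 * gbinom (2 * x + (b : ℕ)) (((i : ℕ) : ℤ) - ((c : ℤ) + (j : ℕ)) + (b : ℤ))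
  else
    gbinom (2 * x + (b : ℕ)) (((i : ℕ) : ℤ) - ((c : ℤ) + (j : ℕ)) + (b : ℤ))

/-- `Δ'(x;b,c)`. -/
def Δ'det (x : ℚ) (b c : ℕ) : ℚ := (M'mat x b c).det



/-- Pochhammer with natural index. -/
noncomputable def pr (a : ℚ) (k : ℕ) : ℚ := ∏ i ∈ Finset.range k, (a + i)

lemma pr_def (a : ℚ) (k : ℕ) : pr a k = ∏ i ∈ Finset.range k, (a + i) := rfl

lemma poch_natCast (a : ℚ) (j : ℕ) : poch a (j : ℤ) = pr a j := by
  simp [poch, pr]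

lemma pr_zero (a : ℚ) : pr a 0 = 1 := by simp [pr]

lemma pr_succ (a : ℚ) (k : ℕ) : pr a (k+1) = pr a k * (a + k) := by
  simp [pr, Finset.prod_range_succ]

lemma pr_succ' (a : ℚ) (k : ℕ) : pr a (k+1) = a * pr (a+1) k := by
  rw [pr, Finset.prod_range_succ']
  simp only [Nat.cast_zero, add_zero, mul_comm]
  rw [pr]
  congr 1
  refine Finset.prod_congr rfl fun i _ => by push_cast; ring

lemma pr_add (a : ℚ) (k l : ℕ) : pr a (k+l) = pr a k * pr (a + k) l := by
  rw [pr, pr, pr, Finset.prod_range_add]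
  congr 1
  refine Finset.prod_congr rfl fun i _ => by push_cast; ring

lemma gbinom_natCast (x : ℚ) (s : ℕ) :
    gbinom x (s : ℤ) = (∏ i ∈ Finset.range s, (x - i)) / (s.factorial : ℚ) := by
  simp [gbinom]

lemma gbinom_neg (x : ℚ) {k : ℤ} (hk : k < 0) : gbinom x k = 0 := by
  rw [gbinom, if_neg (not_le.mpr hk)]

lemma gbinom_zero (x : ℚ) : gbinom x 0 = 1 := by simp [gbinom]

lemma gbinom_absorb (x : ℚ) (k : ℤ) :
    (k : ℚ) * gbinom x k = (x - k + 1) * gbinom x (k-1) := by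
  rcases k with s | s
  · -- k = (s : ℕ)
    cases s with
    | zero =>
      have h0 : gbinom x (Int.ofNat 0 - 1) = 0 := gbinom_neg x (by norm_num)
      rw [h0]
      norm_num
    | succ t =>
      have h1 : (Int.ofNat (t+1)) = ((t+1 : ℕ) : ℤ) := rfl
      have h2 : ((t+1 : ℕ) : ℤ) - 1 = (t : ℤ) := by push_cast; ring
      rw [h1, h2, gbinom_natCast, gbinom_natCast, Finset.prod_range_succ,
        Nat.factorial_succ]
      have ht : (t.factorial : ℚ) ≠ 0 := Nat.cast_ne_zero.mpr t.factorial_ne_zero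
      have ht1 : ((t:ℚ) + 1) ≠ 0 := by positivity
      field_simp
      push_cast
      ring
  · -- negSucc
    have hk : Int.negSucc s < 0 := Int.negSucc_lt_zero s
    rw [gbinom_neg x hk, gbinom_neg x (by omega : Int.negSucc s - 1 < 0)]
    ring

lemma gbinom_pascal (x : ℚ) (k : ℤ) :
    gbinom x k = gbinom (x-1) k + gbinom (x-1) (k-1) := by
  rcases k with s | s
  · cases s with
    | zero =>
      have h0 : gbinom (x-1) (Int.ofNat 0 - 1) = 0 := gbinom_neg (x-1) (by norm_num)
      rw [h0]
      have : (Int.ofNat 0) = (0:ℤ) := rfl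
      rw [this, gbinom_zero, gbinom_zero]
      norm_num
    | succ t =>
      have h1 : (Int.ofNat (t+1)) = ((t+1 : ℕ) : ℤ) := rfl
      have h2 : ((t+1 : ℕ) : ℤ) - 1 = (t : ℤ) := by push_cast; ring
      rw [h1, h2, gbinom_natCast, gbinom_natCast, gbinom_natCast]
      have key : ∏ i ∈ Finset.range (t+1), (x - i)
          = (∏ i ∈ Finset.range t, (x - 1 - i)) * x := by
        rw [Finset.prod_range_succ']
        simp only [Nat.cast_zero, sub_zero]
        congr 1
        refine Finset.prod_congr rfl fun i _ => by push_cast; ring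
      rw [key, Finset.prod_range_succ, Nat.factorial_succ]
      have ht : (t.factorial : ℚ) ≠ 0 := Nat.cast_ne_zero.mpr t.factorial_ne_zero
      have ht1 : ((t:ℚ) + 1) ≠ 0 := by positivity
      field_simp
      push_cast
      ring
  · have hk : Int.negSucc s < 0 := Int.negSucc_lt_zero s
    rw [gbinom_neg x hk, gbinom_neg (x-1) hk,
      gbinom_neg (x-1) (by omega : Int.negSucc s - 1 < 0)]
    ring



/-- nonvanishing of shifted Pochhammer pieces -/
lemma pr_shift_ne (b t j : ℕ) (h : t + j < b) : pr (1 - (b:ℚ) + t) j ≠ 0 := by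
  rw [pr_def]
  refine Finset.prod_ne_zero_iff.mpr fun i hi => ?_
  have hi' : i ∈ Finset.range j := hi
  have h1 : t + i + 1 < b := by
    have := Finset.mem_range.mp hi'
    omega
  have h2 : ((t:ℚ) + i + 1) < b := by exact_mod_cast Nat.cast_lt.mpr h1
  intro hzero
  have : (1 : ℚ) - b + t + i = 0 := hzero
  linarith

lemma pr_ne (b j : ℕ) (h : j < b) : pr (1 - (b:ℚ)) j ≠ 0 := by
  have := pr_shift_ne b 0 j (by omega)
  simpa using this

noncomputable def lam (b c : ℕ) (j : ℕ) : ℚ :=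
  (-1)^j * pr (1 - (b:ℚ) + c) j * pr (1/2 - (b:ℚ)/2) j / ((j.factorial : ℚ) * pr (1 - (b:ℚ)) j)

lemma lam_zero (b c : ℕ) : lam b c 0 = 1 := by
  simp [lam, pr_zero]

lemma lam_top (b c : ℕ) (hcb : c < b) : lam b c (b - c) = 0 := by
  have h : pr (1 - (b:ℚ) + c) (b - c) = 0 := by
    rw [pr_def]
    refine Finset.prod_eq_zero (Finset.mem_range.mpr (show b - c - 1 < b - c by omega)) ?_
    have : ((b - c - 1 : ℕ) : ℚ) = (b:ℚ) - c - 1 := by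
      have h1 : (b - c - 1 : ℕ) + (c + 1) = b := by omega
      have h2 := congrArg (Nat.cast : ℕ → ℚ) h1
      push_cast at h2
      linarith
    rw [this]; ring
  rw [lam, h]; ring_nf

lemma lam_step (b c : ℕ) (j : ℕ) (hj : j < b - c) :
    lam b c (j+1) * (((j:ℚ)+1) * (1 - (b:ℚ) + j))
      = - lam b c j * (1 - (b:ℚ) + c + j) * (1/2 - (b:ℚ)/2 + j) := by
  rcases Nat.lt_or_ge j (b-1) with hj' | hj'
  · -- main case : j + 1 < b
    have hfac : (j.factorial : ℚ) ≠ 0 := Nat.cast_ne_zero.mpr j.factorial_ne_zero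
    have hpr : pr (1 - (b:ℚ)) j ≠ 0 := pr_ne b j (by omega)
    have hbj : (1 : ℚ) - b + j ≠ 0 := by
      have : (j:ℚ) < (b:ℚ) - 1 := by
        have : (j:ℚ) + 1 < b := by exact_mod_cast Nat.cast_lt.mpr (by omega : j + 1 < b)
        linarith
      intro h; linarith
    have hj1 : ((j:ℚ) + 1) ≠ 0 := by positivity
    rw [lam, lam, pr_succ, pr_succ, pr_succ, Nat.factorial_succ]
    push_cast
    field_simp
    ring
  · -- edge case : j = b - 1 (forces c = 0 since j < b - c)
    have hc : c = 0 := by omega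
    have hjb : j = b - 1 := by omega
    have hb1 : 1 ≤ b := by omega
    have hcast : (j : ℚ) = (b:ℚ) - 1 := by
      rw [hjb]
      push_cast [Nat.cast_sub hb1]
      ring
    have hz1 : (1 : ℚ) - b + j = 0 := by rw [hcast]; ring
    have hz2 : (1 : ℚ) - b + c + j = 0 := by rw [hcast, hc]; push_cast; ring
    rw [hz1, hz2]
    ring

noncomputable def Ssum (b c : ℕ) (x : ℚ) (m : ℕ) : ℚ :=
  ∑ j ∈ Finset.range (b - c), lam b c j * gbinom x ((m:ℤ) - j)

noncomputable def Efun (b c : ℕ) (m : ℕ) : ℚ :=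
  (c.choose m : ℚ) * pr (1/2 - (b:ℚ)/2) m / pr (1 - (b:ℚ)) m

lemma Ssum_zero (b c : ℕ) (hcb : c < b) (x : ℚ) : Ssum b c x 0 = 1 := by
  rw [Ssum]
  simp only [Nat.cast_zero]
  rw [Finset.sum_eq_single 0]
  · rw [lam_zero]
    norm_num [gbinom_zero]
  · intro j _ hj0
    have : ((0:ℤ) - j) < 0 := by
      have : 0 < j := Nat.pos_of_ne_zero hj0
      omega
    rw [gbinom_neg x this, mul_zero]
  · intro h
    exact absurd (Finset.mem_range.mpr (by omega : 0 < b - c)) h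

lemma Efun_zero (b c : ℕ) : Efun b c 0 = 1 := by
  simp [Efun, pr_zero]

lemma term_id (b c : ℕ) (m j : ℕ) (hj : j < b - c) :
    ((m:ℚ)+1)*((m:ℚ)+1-b) * (lam b c j * gbinom ((c:ℚ) - b/2 + 1/2) ((m:ℤ)+1-j))
    + ((m:ℚ)-c)*((m:ℚ)+1-(1+(b:ℚ))/2) * (lam b c j * gbinom ((c:ℚ) - b/2 + 1/2) ((m:ℤ)-j))
    = ((j:ℚ)+1)*((b:ℚ)-((j:ℚ)+1)) * (lam b c (j+1) * gbinom ((c:ℚ) - b/2 + 1/2) ((m:ℤ)-j))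
      - (j:ℚ)*((b:ℚ)-j) * (lam b c j * gbinom ((c:ℚ) - b/2 + 1/2) ((m:ℤ)+1-j)) := by
  set x := (c:ℚ) - b/2 + 1/2 with hx
  have habs := gbinom_absorb x ((m:ℤ)+1-j)
  have harg : (m:ℤ)+1-j-1 = (m:ℤ)-j := by ring
  rw [harg] at habs
  push_cast at habs
  have hstep := lam_step b c j hj
  linear_combination (lam b c j * ((m:ℚ)+1+j-b)) * habs
    + gbinom x ((m:ℤ)-j) * hstep

lemma Srec (b c : ℕ) (hcb : c < b) (m : ℕ) :
    ((m:ℚ)+1)*((m:ℚ)+1-b) * Ssum b c ((c:ℚ) - b/2 + 1/2) (m+1)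
    + ((m:ℚ)-c)*((m:ℚ)+1-(1+(b:ℚ))/2) * Ssum b c ((c:ℚ) - b/2 + 1/2) m = 0 := by
  set x := (c:ℚ) - b/2 + 1/2 with hx
  rw [Ssum, Ssum, Finset.mul_sum, Finset.mul_sum, ← Finset.sum_add_distrib]
  have hcongr : ∀ j ∈ Finset.range (b-c),
      ((m:ℚ)+1)*((m:ℚ)+1-b) * (lam b c j * gbinom x (((m+1:ℕ):ℤ) - j))
      + ((m:ℚ)-c)*((m:ℚ)+1-(1+(b:ℚ))/2) * (lam b c j * gbinom x ((m:ℤ) - j))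
      = (fun j : ℕ => (j:ℚ)*((b:ℚ)-j) * (lam b c j * gbinom x ((m:ℤ)+1-j))) (j+1)
        - (fun j : ℕ => (j:ℚ)*((b:ℚ)-j) * (lam b c j * gbinom x ((m:ℤ)+1-j))) j := by
    intro j hjm
    have hj := Finset.mem_range.mp hjm
    have h1 : ((m+1:ℕ):ℤ) - (j:ℤ) = (m:ℤ)+1-j := by push_cast; ring
    have h2 : (m:ℤ)+1-((j+1:ℕ):ℤ) = (m:ℤ)-j := by push_cast; ring
    simp only [h1, h2]
    have := term_id b c m j hj
    push_cast
    linear_combination this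
  rw [Finset.sum_congr rfl hcongr, Finset.sum_range_sub
    (fun j : ℕ => (j:ℚ)*((b:ℚ)-j) * (lam b c j * gbinom x ((m:ℤ)+1-j)))]
  rw [lam_top b c hcb]
  norm_num

lemma Erec (b c : ℕ) (m : ℕ) (hm : m + 1 < b) :
    ((m:ℚ)+1)*((m:ℚ)+1-b) * Efun b c (m+1)
    + ((m:ℚ)-c)*((m:ℚ)+1-(1+(b:ℚ))/2) * Efun b c m = 0 := by
  have hch : ((c.choose (m+1) : ℚ)) * ((m:ℚ)+1) = (c.choose m : ℚ) * ((c:ℚ) - m) := by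
    rcases Nat.lt_or_ge m c with h | h
    · have := Nat.choose_succ_right_eq c m
      have h2 := congrArg (Nat.cast : ℕ → ℚ) this
      push_cast [Nat.cast_sub (by omega : m ≤ c)] at h2
      linarith
    · rcases Nat.eq_or_lt_of_le h with h' | h'
      · subst h'
        rw [Nat.choose_eq_zero_of_lt (by omega)]
        push_cast; ring
      · rw [Nat.choose_eq_zero_of_lt (by omega), Nat.choose_eq_zero_of_lt (by omega)]
        push_cast; ring
  have hm1 : ((m:ℚ)+1) ≠ 0 := by positivity
  have hch' : (c.choose (m+1) : ℚ) = (c.choose m : ℚ) * ((c:ℚ) - m) / ((m:ℚ)+1) := by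
    field_simp
    linear_combination hch
  have hpr : pr (1 - (b:ℚ)) m ≠ 0 := pr_ne b m (by omega)
  have hbm : (1:ℚ) - b + m ≠ 0 := by
    have : (m:ℚ) + 1 < b := by exact_mod_cast Nat.cast_lt.mpr hm
    intro hz; linarith
  rw [Efun, Efun, pr_succ, pr_succ, hch']
  set P1 := pr (1/2 - (b:ℚ)/2) m with hP1
  set P2 := pr (1 - (b:ℚ)) m with hP2
  field_simp
  ring

lemma S_closed (b c : ℕ) (hcb : c < b) :
    ∀ m, m < b → Ssum b c ((c:ℚ) - b/2 + 1/2) m = Efun b c m := by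
  intro m
  induction m with
  | zero => intro _; rw [Ssum_zero b c hcb, Efun_zero]
  | succ m ih =>
    intro hm
    have hS := Srec b c hcb m
    have hE := Erec b c m hm
    have hmb : m < b := by omega
    rw [ih hmb] at hS
    have ha : ((m:ℚ)+1)*((m:ℚ)+1-b) ≠ 0 := by
      have h1 : ((m:ℚ)+1) ≠ 0 := by positivity
      have h2 : ((m:ℚ)+1-b) ≠ 0 := by
        have : (m:ℚ) + 1 < b := by exact_mod_cast Nat.cast_lt.mpr hm
        intro hz; linarith
      exact mul_ne_zero h1 h2
    have := sub_eq_zero.mpr (hS.trans hE.symm)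
    have h3 : ((m:ℚ)+1)*((m:ℚ)+1-b) * (Ssum b c ((c:ℚ) - b/2 + 1/2) (m+1) - Efun b c (m+1)) = 0 := by
      linarith [hS, hE]
    rcases mul_eq_zero.mp h3 with h | h
    · exact absurd h ha
    · linarith [sub_eq_zero.mp h]

lemma pascal_sum (b c : ℕ) (x : ℚ) (m : ℕ) :
    Ssum b c x (m+1) = Ssum b c (x-1) (m+1) + Ssum b c (x-1) m := by
  rw [Ssum, Ssum, Ssum, ← Finset.sum_add_distrib]
  refine Finset.sum_congr rfl fun j _ => ?_
  have h1 : ((m+1:ℕ):ℤ) - (j:ℤ) - 1 = (m:ℤ) - j := by push_cast; ring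
  rw [gbinom_pascal x (((m+1:ℕ):ℤ) - j), h1]
  ring

lemma T_closed (b c : ℕ) (hcb : c < b) :
    ∀ m, m < b → Ssum b c ((c:ℚ) - b/2 + 1/2 - 1) m
      = ∑ k ∈ Finset.range (m+1), (-1:ℚ)^(m-k) * Efun b c k := by
  intro m
  induction m with
  | zero =>
    intro _
    rw [Ssum_zero b c hcb]
    simp [Efun_zero]
  | succ m ih =>
    intro hm
    have hS := pascal_sum b c ((c:ℚ) - b/2 + 1/2) m
    have hT : Ssum b c ((c:ℚ) - b/2 + 1/2 - 1) (m+1)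
        = Efun b c (m+1) - ∑ k ∈ Finset.range (m+1), (-1:ℚ)^(m-k) * Efun b c k := by
      rw [← ih (by omega), ← S_closed b c hcb (m+1) hm]
      linarith [hS]
    have hc2 : ∀ k ∈ Finset.range (m+1), (-1:ℚ)^(m+1-k) * Efun b c k
        = -((-1:ℚ)^(m-k) * Efun b c k) := by
      intro k hk
      have hk' : k ≤ m := by
        have := Finset.mem_range.mp hk; omega
      have h3 : m+1-k = (m-k)+1 := by omega
      rw [h3, pow_succ]
      ring
    have hneg : ∑ k ∈ Finset.range (m+1), (-1:ℚ)^(m+1-k) * Efun b c k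
        = -∑ k ∈ Finset.range (m+1), (-1:ℚ)^(m-k) * Efun b c k := by
      rw [← Finset.sum_neg_distrib]
      exact Finset.sum_congr rfl hc2
    rw [hT]
    rw [Finset.sum_range_succ (fun k => (-1:ℚ)^(m+1-k) * Efun b c k) (m+1), hneg]
    simp only [Nat.sub_self, pow_zero, one_mul]
    ring

lemma vdm : ∀ (N : ℕ) (β γ : ℚ),
    ∑ k ∈ Finset.range (N+1), (-1:ℚ)^k * (N.choose k : ℚ) * pr β k * pr (γ+k) (N-k)
      = pr (γ-β) N := by
  intro N
  induction N with
  | zero => intro β γ; simp [pr_zero]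
  | succ N ih =>
    intro β γ
    have hsplit : ∀ k ∈ Finset.range (N+2),
        (-1:ℚ)^k * ((N+1).choose k : ℚ) * pr β k * pr (γ+k) (N+1-k)
        = (-1:ℚ)^k * (N.choose k : ℚ) * pr β k * pr (γ+k) (N+1-k)
          + (if k = 0 then 0 else (-1:ℚ)^k * (N.choose (k-1) : ℚ) * pr β k * pr (γ+k) (N+1-k)) := by
      intro k _
      cases k with
      | zero => simp
      | succ t =>
        rw [if_neg (by omega)]
        have : ((N+1).choose (t+1) : ℚ) = (N.choose t : ℚ) + (N.choose (t+1) : ℚ) := by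
          rw [Nat.choose_succ_succ]
          push_cast; ring
        rw [this]
        simp only [Nat.add_sub_cancel]
        ring
    rw [Finset.sum_congr rfl hsplit, Finset.sum_add_distrib]
    -- first sum
    have hA : ∑ k ∈ Finset.range (N+2),
        (-1:ℚ)^k * (N.choose k : ℚ) * pr β k * pr (γ+k) (N+1-k)
        = (γ + N) * pr (γ-β) N := by
      rw [Finset.sum_range_succ]
      rw [Nat.choose_succ_self]
      have hA2 : ∀ k ∈ Finset.range (N+1),
          (-1:ℚ)^k * (N.choose k : ℚ) * pr β k * pr (γ+k) (N+1-k)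
          = (γ + N) * ((-1:ℚ)^k * (N.choose k : ℚ) * pr β k * pr (γ+k) (N-k)) := by
        intro k hk
        have hk' : k ≤ N := by have := Finset.mem_range.mp hk; omega
        have h1 : N+1-k = (N-k)+1 := by omega
        rw [h1, pr_succ]
        have h2 : (γ + k + ((N-k : ℕ):ℚ)) = γ + N := by
          have : ((N-k:ℕ):ℚ) = (N:ℚ) - k := by
            have := congrArg (Nat.cast : ℕ → ℚ) (Nat.sub_add_cancel hk')
            push_cast at this
            linarith
          rw [this]; ring
        rw [h2]; ring
      rw [Finset.sum_congr rfl hA2, ← Finset.mul_sum, ih β γ]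
      push_cast; ring
    -- second sum
    have hB : ∑ k ∈ Finset.range (N+2),
        (if k = 0 then (0:ℚ) else (-1:ℚ)^k * (N.choose (k-1) : ℚ) * pr β k * pr (γ+k) (N+1-k))
        = -β * pr (γ-β) N := by
      rw [Finset.sum_range_succ']
      simp only [if_pos rfl, add_zero, Nat.add_sub_cancel]
      have hB2 : ∀ k ∈ Finset.range (N+1),
          (if k+1 = 0 then (0:ℚ) else (-1:ℚ)^(k+1) * (N.choose k : ℚ) * pr β (k+1) * pr (γ+(k+1:ℕ)) (N+1-(k+1)))
          = -β * ((-1:ℚ)^k * (N.choose k : ℚ) * pr (β+1) k * pr ((γ+1)+k) (N-k)) := by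
        intro k _
        rw [if_neg (by omega), pr_succ']
        have h1 : N+1-(k+1) = N-k := by omega
        have h2 : (γ + ((k+1:ℕ):ℚ)) = (γ+1) + k := by push_cast; ring
        rw [h1, h2, pow_succ]
        ring
      rw [Finset.sum_congr rfl hB2, ← Finset.mul_sum]
      have := ih (β+1) (γ+1)
      have harg : γ + 1 - (β+1) = γ - β := by ring
      rw [harg] at this
      rw [this]
      norm_num
    rw [hA, hB, pr_succ]
    ring

lemma Efun_split (b c : ℕ) (hcb : c < b) (k : ℕ) (hk : k < c) :
    Efun b c k
      = ((c.choose k : ℚ) * pr (1/2 - (b:ℚ)/2) k * pr ((1 - (b:ℚ)) + k) (c - k))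
        / pr (1 - (b:ℚ)) c := by
  have hsplit : pr (1 - (b:ℚ)) c = pr (1 - (b:ℚ)) k * pr ((1 - (b:ℚ)) + k) (c - k) := by
    have h1 : c = k + (c - k) := by omega
    conv_lhs => rw [h1]
    exact pr_add _ k (c-k)
  have h2 : pr (1 - (b:ℚ)) k ≠ 0 := pr_ne b k (by omega)
  have h3 : pr ((1 - (b:ℚ)) + k) (c - k) ≠ 0 := by
    exact pr_shift_ne b k (c-k) (by omega)
  rw [Efun, hsplit]
  field_simp

lemma key_zero (b c : ℕ) (hcb : c < b) (hc : Even c) :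
    ∑ k ∈ Finset.range c, (-1:ℚ)^k * Efun b c k = 0 := by
  have hV := vdm c (1/2 - (b:ℚ)/2) (1 - (b:ℚ))
  have harg : (1 - (b:ℚ)) - (1/2 - (b:ℚ)/2) = 1/2 - (b:ℚ)/2 := by ring
  rw [harg, Finset.sum_range_succ] at hV
  have hlast : (-1:ℚ)^c * (c.choose c : ℚ) * pr (1/2 - (b:ℚ)/2) c * pr ((1 - (b:ℚ))+c) (c-c)
      = pr (1/2 - (b:ℚ)/2) c := by
    rw [Nat.choose_self, hc.neg_one_pow]
    simp [pr_zero]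
  rw [hlast] at hV
  have hV0 : ∑ k ∈ Finset.range c,
      (-1:ℚ)^k * (c.choose k : ℚ) * pr (1/2 - (b:ℚ)/2) k * pr ((1 - (b:ℚ))+k) (c-k) = 0 := by
    linarith
  have hprc : pr (1 - (b:ℚ)) c ≠ 0 := pr_ne b c hcb
  have hcongr : ∀ k ∈ Finset.range c, (-1:ℚ)^k * Efun b c k
      = ((-1:ℚ)^k * (c.choose k : ℚ) * pr (1/2 - (b:ℚ)/2) k * pr ((1 - (b:ℚ))+k) (c-k))
        / pr (1 - (b:ℚ)) c := by
    intro k hk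
    rw [Efun_split b c hcb k (Finset.mem_range.mp hk)]
    ring
  rw [Finset.sum_congr rfl hcongr, ← Finset.sum_div, hV0, zero_div]

/-- Equation (3.77): the explicit vanishing linear combination of the columns of
the matrix `D` of Lemma 4.  Rows and columns are indexed by `c ≤ i,j < b`,
realized as `i = c + i'`, `j = c + j'` with `i', j' : Fin (b-c)`. -/
theorem lemma4_column_relation (b c : ℕ) (hb : Even b) (hc : Even c) (hcb : c < b) :
    ∀ i : Fin (b - c),
      ∑ j : Fin (b - c),
        ((-1 : ℚ) ^ (c + (j : ℕ)) * poch (1 - (b : ℚ) + c) ((j : ℕ) : ℤ) *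
              poch (1 / 2 - (b : ℚ) / 2) ((j : ℕ) : ℤ) /
            ((Nat.factorial (j : ℕ) : ℚ) * poch (1 - (b : ℚ)) ((j : ℕ) : ℤ))) *
          (if (i : ℕ) = 0 then
            gbinom ((c : ℚ) - (b : ℚ) / 2 - 1 / 2)
              (2 * (c : ℤ) - 1 - ((c : ℤ) + (j : ℕ)))
          else
            gbinom ((c : ℚ) - (b : ℚ) / 2 + 1 / 2)
              (((c : ℤ) + (i : ℕ)) - ((c : ℤ) + (j : ℕ)) + (c : ℤ))) = 0 := by
  intro i
  have hco : ∀ j : ℕ,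
      ((-1 : ℚ) ^ (c + j) * poch (1 - (b : ℚ) + c) (j : ℤ) *
          poch (1 / 2 - (b : ℚ) / 2) (j : ℤ) /
        ((Nat.factorial j : ℚ) * poch (1 - (b : ℚ)) (j : ℤ))) = lam b c j := by
    intro j
    rw [poch_natCast, poch_natCast, poch_natCast, lam, pow_add, hc.neg_one_pow, one_mul]
  by_cases hi : (i : ℕ) = 0
  · simp only [hi, if_pos]
    rw [Fin.sum_univ_eq_sum_range (fun j : ℕ =>
      ((-1 : ℚ) ^ (c + j) * poch (1 - (b : ℚ) + c) (j : ℤ) *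
          poch (1 / 2 - (b : ℚ) / 2) (j : ℤ) /
        ((Nat.factorial j : ℚ) * poch (1 - (b : ℚ)) (j : ℤ))) *
        gbinom ((c : ℚ) - (b : ℚ) / 2 - 1 / 2) (2 * (c : ℤ) - 1 - ((c : ℤ) + j))) (b-c)]
    by_cases hc0 : c = 0
    · subst hc0
      refine Finset.sum_eq_zero fun j _ => ?_
      have hneg : 2 * ((0:ℕ) : ℤ) - 1 - (((0:ℕ) : ℤ) + j) < 0 := by
        have : (0:ℤ) ≤ (j:ℤ) := Int.natCast_nonneg j
        omega
      rw [gbinom_neg _ hneg, mul_zero]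
    · have hc1 : 1 ≤ c := by omega
      have hT := T_closed b c hcb (c-1) (by omega)
      have hgoal : ∑ j ∈ Finset.range (b-c),
          ((-1 : ℚ) ^ (c + j) * poch (1 - (b : ℚ) + c) (j : ℤ) *
              poch (1 / 2 - (b : ℚ) / 2) (j : ℤ) /
            ((Nat.factorial j : ℚ) * poch (1 - (b : ℚ)) (j : ℤ))) *
            gbinom ((c : ℚ) - (b : ℚ) / 2 - 1 / 2) (2 * (c : ℤ) - 1 - ((c : ℤ) + j))
          = Ssum b c ((c:ℚ) - b/2 + 1/2 - 1) (c-1) := by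
        rw [Ssum]
        refine Finset.sum_congr rfl fun j _ => ?_
        rw [hco j]
        have hx : (c : ℚ) - (b : ℚ) / 2 - 1 / 2 = (c:ℚ) - b/2 + 1/2 - 1 := by ring
        have hidx : 2 * (c : ℤ) - 1 - ((c : ℤ) + j) = (((c-1:ℕ)) : ℤ) - j := by
          have : ((c-1:ℕ) : ℤ) = (c:ℤ) - 1 := by
            push_cast [Nat.cast_sub hc1]; ring
          rw [this]; ring
        rw [hx, hidx]
      rw [hgoal, hT]
      have hc' : c - 1 + 1 = c := by omega
      rw [hc']
      have hcongr2 : ∀ k ∈ Finset.range c, (-1:ℚ)^(c-1-k) * Efun b c k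
          = (-1:ℚ)^(c-1) * ((-1:ℚ)^k * Efun b c k) := by
        intro k hk
        have hk' : k ≤ c - 1 := by
          have := Finset.mem_range.mp hk; omega
        have h1 : (-1:ℚ)^(c-1-k) = (-1:ℚ)^(c-1-k) * ((-1:ℚ)^(2*k)) := by
          rw [pow_mul]; norm_num
        have h2 : c-1-k + 2*k = (c-1) + k := by omega
        rw [h1, ← pow_add, h2, pow_add]
        ring
      rw [Finset.sum_congr rfl hcongr2, ← Finset.mul_sum, key_zero b c hcb hc, mul_zero]
  · simp only [if_neg hi]
    rw [Fin.sum_univ_eq_sum_range (fun j : ℕ =>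
      ((-1 : ℚ) ^ (c + j) * poch (1 - (b : ℚ) + c) (j : ℤ) *
          poch (1 / 2 - (b : ℚ) / 2) (j : ℤ) /
        ((Nat.factorial j : ℚ) * poch (1 - (b : ℚ)) (j : ℤ))) *
        gbinom ((c : ℚ) - (b : ℚ) / 2 + 1 / 2) (((c : ℤ) + (i:ℕ)) - ((c : ℤ) + j) + (c : ℤ))) (b-c)]
    have hgoal : ∑ j ∈ Finset.range (b-c),
        ((-1 : ℚ) ^ (c + j) * poch (1 - (b : ℚ) + c) (j : ℤ) *
            poch (1 / 2 - (b : ℚ) / 2) (j : ℤ) /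
          ((Nat.factorial j : ℚ) * poch (1 - (b : ℚ)) (j : ℤ))) *
          gbinom ((c : ℚ) - (b : ℚ) / 2 + 1 / 2) (((c : ℤ) + (i:ℕ)) - ((c : ℤ) + j) + (c : ℤ))
        = Ssum b c ((c:ℚ) - b/2 + 1/2) (c + (i:ℕ)) := by
      rw [Ssum]
      refine Finset.sum_congr rfl fun j _ => ?_
      rw [hco j]
      have hidx : ((c : ℤ) + (i:ℕ)) - ((c : ℤ) + j) + (c : ℤ) = (((c + (i:ℕ) : ℕ)) : ℤ) - j := by
        push_cast; ring
      rw [hidx]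
    rw [hgoal, S_closed b c hcb (c + (i:ℕ)) (by have := i.isLt; omega)]
    rw [Efun, Nat.choose_eq_zero_of_lt (by omega : c < c + (i:ℕ))]
    norm_num
end

section
/- Let b, c be nonnegative integers with c ≤ b. Then Δ'(x;b,c), regarded as an element of the polynomial ring ℚ[x] (the determinant of the matrix M'(x;b,c) with polynomial entries), has degree at most c(b-c). -/
open Finset Polynomial

/-- Generalized binomial coefficient `C(p,k)` as a polynomial in the "variable" `p`. -/
noncomputable def gbinomP (p : Polynomial ℚ) (k : ℤ) : Polynomial ℚ :=
  if 0 ≤ k then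
    Polynomial.C ((k.toNat.factorial : ℚ)⁻¹) * ∏ m ∈ Finset.range k.toNat, (p - Polynomial.C (m : ℚ))
  else 0

/-- Shifted factorial `(p)_k` of a polynomial, nonnegative index. -/
noncomputable def pochP (p : Polynomial ℚ) (k : ℕ) : Polynomial ℚ :=
  ∏ m ∈ Finset.range k, (p + Polynomial.C (m : ℚ))

/-- The matrix `M'(x;b,c)` with polynomial entries; column index `j` of the paper is `c + j'`. -/
noncomputable def M'pmat (b c : ℕ) : Matrix (Fin b) (Fin b) (Polynomial ℚ) := fun i j =>
  if c + (j : ℕ) < b then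
    gbinomP (Polynomial.X + Polynomial.C (c : ℚ))
      (((i : ℕ) : ℤ) - ((c : ℤ) + (j : ℕ)) + (c : ℤ))
  else if (i : ℕ) < c then
    2 * gbinomP (2 * Polynomial.X + Polynomial.C (b : ℚ))
      (((i : ℕ) : ℤ) - ((c : ℤ) + (j : ℕ)) + (b : ℤ))
  else
    gbinomP (2 * Polynomial.X + Polynomial.C (b : ℚ))
      (((i : ℕ) : ℤ) - ((c : ℤ) + (j : ℕ)) + (b : ℤ))

/-- `Δ'(x;b,c)` as a polynomial in `x`. -/
noncomputable def Δ'poly (b c : ℕ) : Polynomial ℚ := (M'pmat b c).det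

lemma gbinomP_neg {p : Polynomial ℚ} {k : ℤ} (h : k < 0) : gbinomP p k = 0 := by
  simp [gbinomP, not_le.2 h]

lemma natDegree_gbinomP_le {p : Polynomial ℚ} (hp : p.natDegree ≤ 1) (k : ℤ) :
    (gbinomP p k).natDegree ≤ k.toNat := by
  unfold gbinomP
  split
  · refine (natDegree_mul_le).trans ?_
    simp only [natDegree_C, zero_add]
    refine (natDegree_prod_le _ _).trans ?_
    calc ∑ m ∈ Finset.range k.toNat, (p - C (m:ℚ)).natDegree
        ≤ ∑ _m ∈ Finset.range k.toNat, 1 :=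
          Finset.sum_le_sum (fun m _ => (natDegree_sub_le _ _).trans (by simpa using hp))
      _ = k.toNat := by simp
  · simp

lemma natDegree_p1 (c : ℕ) : (Polynomial.X + Polynomial.C (c : ℚ)).natDegree ≤ 1 := by
  refine (natDegree_add_le _ _).trans ?_; simp

lemma natDegree_p2 (b : ℕ) : (2 * Polynomial.X + Polynomial.C (b : ℚ)).natDegree ≤ 1 := by
  refine (natDegree_add_le _ _).trans (max_le ?_ (by simp))
  exact (natDegree_mul_le).trans (by simp)

/-- Entry degree/nonvanishing bound. -/
lemma entry_bound (b c : ℕ) (i j : Fin b) (hne : M'pmat b c i j ≠ 0) :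
    (0 : ℤ) ≤ (((i:ℕ):ℤ) - j) + (if c + (j:ℕ) < b then 0 else (b:ℤ) - c) ∧
    (M'pmat b c i j).natDegree ≤
      ((((i:ℕ):ℤ) - j) + (if c + (j:ℕ) < b then 0 else (b:ℤ) - c)).toNat := by
  unfold M'pmat at *
  by_cases hj : c + (j:ℕ) < b
  · simp only [hj, if_true] at *
    have hk : (0:ℤ) ≤ ((i:ℕ):ℤ) - ((c:ℤ) + (j:ℕ)) + (c:ℤ) := by
      by_contra h
      exact hne (gbinomP_neg (by omega))
    constructor
    · omega
    · refine (natDegree_gbinomP_le (natDegree_p1 c) _).trans ?_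
      omega
  · simp only [hj, if_false] at *
    have hne2 : gbinomP (2 * Polynomial.X + Polynomial.C (b : ℚ))
        (((i:ℕ):ℤ) - ((c:ℤ) + (j:ℕ)) + (b:ℤ)) ≠ 0 := by
      intro h
      apply hne
      simp only [h, mul_zero, ite_self]
    have hk : (0:ℤ) ≤ ((i:ℕ):ℤ) - ((c:ℤ) + (j:ℕ)) + (b:ℤ) := by
      by_contra h
      exact hne2 (gbinomP_neg (by omega))
    refine ⟨by omega, ?_⟩
    have hg := natDegree_gbinomP_le (natDegree_p2 b) (((i:ℕ):ℤ) - ((c:ℤ) + (j:ℕ)) + (b:ℤ))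
    split
    · refine (natDegree_mul_le).trans ?_
      have h2 : (2 : Polynomial ℚ).natDegree = 0 := natDegree_ofNat 2
      rw [h2, zero_add]
      exact hg.trans (by omega)
    · exact hg.trans (by omega)

lemma natDegree_units_smul (ε : ℤˣ) (p : Polynomial ℚ) :
    (ε • p).natDegree = p.natDegree := by
  rcases Int.units_eq_one_or ε with h | h <;> subst h
  · rw [one_smul]
  · rw [Units.smul_def, Units.val_neg, Units.val_one, neg_smul, one_smul, natDegree_neg]

set_option maxHeartbeats 1000000 in
/-- `Δ'(x;b,c)`, as a polynomial in `x`, has degree at most `c(b-c)`. -/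
theorem delta'_degree_le (b c : ℕ) (hcb : c ≤ b) :
    (Δ'poly b c).natDegree ≤ c * (b - c) := by
  rw [Δ'poly, Matrix.det_apply]
  refine Polynomial.natDegree_sum_le_of_forall_le _ _ (fun σ _ => ?_)
  rw [natDegree_units_smul]
  by_cases hz : ∃ i, M'pmat b c (σ i) i = 0
  · obtain ⟨i, hi⟩ := hz
    rw [Finset.prod_eq_zero (f := fun i => M'pmat b c (σ i) i) (Finset.mem_univ i) hi]
    simp
  · push_neg at hz
    set K : Fin b → Fin b → ℤ :=
      fun i j => (((i:ℕ):ℤ) - j) + (if c + (j:ℕ) < b then 0 else (b:ℤ) - c) with hK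
    have hent := fun i => entry_bound b c (σ i) i (hz i)
    have h1 : (∏ i, M'pmat b c (σ i) i).natDegree ≤ ∑ i, (K (σ i) i).toNat :=
      (Polynomial.natDegree_prod_le _ _).trans (Finset.sum_le_sum fun i _ => (hent i).2)
    refine h1.trans ?_
    have hsum : ∑ i, K (σ i) i = (c:ℤ) * ((b:ℤ) - c) := by
      have e1 : ∑ i, K (σ i) i
          = (∑ i : Fin b, (((σ i:ℕ):ℤ) - ((i : ℕ):ℤ)))
            + ∑ i : Fin b, (if c + (i:ℕ) < b then 0 else (b:ℤ) - c) := by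
        rw [← Finset.sum_add_distrib]
      rw [e1]
      have e2 : ∑ i : Fin b, (((σ i:ℕ):ℤ) - ((i : ℕ):ℤ)) = 0 := by
        rw [Finset.sum_sub_distrib, Equiv.sum_comp σ (fun j : Fin b => ((j:ℕ):ℤ))]
        ring
      rw [e2, zero_add, Fin.sum_univ_eq_sum_range
        (fun j => (if c + j < b then (0:ℤ) else (b:ℤ) - c))]
      rw [Finset.sum_ite]
      simp only [Finset.sum_const_zero, Finset.sum_const, zero_add, smul_eq_mul]
      have hfil : Finset.filter (fun j => ¬ c + j < b) (Finset.range b)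
          = Finset.Ico (b - c) b := by
        ext j
        simp only [Finset.mem_filter, Finset.mem_range, Finset.mem_Ico, not_lt]
        omega
      rw [hfil, Nat.card_Ico]
      have : b - (b - c) = c := by omega
      rw [this, nsmul_eq_mul]
    have hfin : ((∑ i, (K (σ i) i).toNat : ℕ) : ℤ) = ((c * (b - c) : ℕ) : ℤ) := by
      push_cast [Nat.cast_sub hcb]
      rw [Finset.sum_congr rfl (fun i _ => Int.toNat_of_nonneg (hent i).1)]
      exact hsum
    exact le_of_eq (Nat.cast_injective hfin)
end
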